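/- For each rational prime p let T_p : ℤ_p → ℤ_p be a quotient-preserving map that is measure-preserving and ergodic with respect to the Haar probability measure on ℤ_p. Then the product map T = ∏_p T_p acting coordinatewise on G = ∏_p ℤ_p (product over all primes) is a quotient-preserving map that is measure-preserving and ergodic with respect to the product of the Haar probability measures (which is the Haar measure on G). -/

import Mathlib

open MeasureTheory

instance (q : Nat.Primes) : Fact (q : ℕ).Prime := ⟨q.2⟩
noncomputable instance (p : ℕ) [Fact p.Prime] : MeasurableSpace ℤ_[p] := borel _
instance (p : ℕ) [Fact p.Prime] : BorelSpace ℤ_[p] := ⟨rfl⟩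

/-- `T` factors through the quotient map `G → G/N` (additive version). -/
def AddMapFactorsThrough {G : Type*} [AddGroup G] (T : G → G) (N : AddSubgroup G) : Prop :=
  ∀ x y : G, x - y ∈ N → T x - T y ∈ N

/-- `T` is a quotient-preserving map: the open subgroups through whose quotient maps
`T` factors contain a base of neighborhoods of `0` (additive, abelian version). -/
def AddQuotientPreserving {G : Type*} [AddGroup G] [TopologicalSpace G] (T : G → G) : Prop :=
  ∀ U ∈ nhds (0 : G), ∃ N : AddSubgroup G,
    IsOpen (N : Set G) ∧ (N : Set G) ⊆ U ∧ AddMapFactorsThrough T N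

namespace Stmt18Aux

/-! ### Cosets as sets -/

section Coset

variable {G : Type*} [AddCommGroup G]

def cosetOf (N : AddSubgroup G) (x : G) : Set G := {z | z - x ∈ N}

lemma mem_cosetOf {N : AddSubgroup G} {x z : G} : z ∈ cosetOf N x ↔ z - x ∈ N := Iff.rfl

lemma self_mem_cosetOf (N : AddSubgroup G) (x : G) : x ∈ cosetOf N x := by
  simp only [mem_cosetOf, sub_self]; exact N.zero_mem

lemma cosetOf_eq_of_mem {N : AddSubgroup G} {x y : G} (h : y ∈ cosetOf N x) :
    cosetOf N y = cosetOf N x := by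
  rw [mem_cosetOf] at h
  ext z
  simp only [mem_cosetOf]
  constructor
  · intro hz
    have := N.add_mem hz h
    rwa [sub_add_sub_cancel] at this
  · intro hz
    have := N.sub_mem hz h
    rwa [sub_sub_sub_cancel_right] at this

lemma disjoint_cosetOf {N : AddSubgroup G} {x y : G} (h : y ∉ cosetOf N x) :
    Disjoint (cosetOf N y) (cosetOf N x) := by
  rw [Set.disjoint_left]
  intro z hzy hzx
  apply h
  rw [mem_cosetOf] at *
  have := N.sub_mem hzx hzy
  rwa [sub_sub_sub_cancel_left] at this

lemma cosetOf_top (x : G) : cosetOf (⊤ : AddSubgroup G) x = Set.univ := by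
  ext z; simp [mem_cosetOf]

variable [TopologicalSpace G] [IsTopologicalAddGroup G]

lemma isOpen_cosetOf {N : AddSubgroup G} (hN : IsOpen (N : Set G)) (x : G) :
    IsOpen (cosetOf N x) := by
  have h : cosetOf N x = (fun z => z - x) ⁻¹' (N : Set G) := rfl
  rw [h]
  exact hN.preimage (continuous_sub_right x)

lemma measurableSet_cosetOf [MeasurableSpace G] [OpensMeasurableSpace G] {N : AddSubgroup G}
    (hN : IsOpen (N : Set G)) (x : G) : MeasurableSet (cosetOf N x) :=
  (isOpen_cosetOf hN x).measurableSet

lemma measure_cosetOf [MeasurableSpace G] [BorelSpace G] (μ : Measure G)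
    [μ.IsAddLeftInvariant] (N : AddSubgroup G) (x : G) :
    μ (cosetOf N x) = μ (N : Set G) := by
  have h : cosetOf N x = (fun z => -x + z) ⁻¹' (N : Set G) := by
    ext z; simp [mem_cosetOf, neg_add_eq_sub]
  rw [h, measure_preimage_add]

end Coset

/-! ### Factoring lemmas -/

section Factor

variable {G : Type*} [AddCommGroup G]

lemma factors_inf {T : G → G} {N₁ N₂ : AddSubgroup G}
    (h₁ : AddMapFactorsThrough T N₁) (h₂ : AddMapFactorsThrough T N₂) :
    AddMapFactorsThrough T (N₁ ⊓ N₂) := fun x y hxy =>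
  ⟨h₁ x y hxy.1, h₂ x y hxy.2⟩

lemma factors_iterate {T : G → G} {N : AddSubgroup G}
    (h : AddMapFactorsThrough T N) (k : ℕ) {x y : G} (hxy : x - y ∈ N) :
    T^[k] x - T^[k] y ∈ N := by
  induction k with
  | zero => simpa using hxy
  | succ n ih =>
    rw [Function.iterate_succ_apply', Function.iterate_succ_apply']
    exact h _ _ ih

end Factor

/-! ### Quotient-preserving maps are continuous -/

lemma aqp_continuous {G : Type*} [AddCommGroup G] [TopologicalSpace G]
    [IsTopologicalAddGroup G] {T : G → G} (h : AddQuotientPreserving T) : Continuous T := by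
  rw [continuous_iff_continuousAt]
  intro x
  intro U hU
  rw [Filter.mem_map]
  have hV : (fun z => z + T x) ⁻¹' U ∈ nhds (0 : G) := by
    have hc : ContinuousAt (fun z => z + T x) 0 := by fun_prop
    have h0 : U ∈ nhds ((fun z => z + T x) 0) := by simpa using hU
    exact hc h0
  obtain ⟨N, hNopen, hNsub, hNf⟩ := h _ hV
  have hsub : cosetOf N x ⊆ T ⁻¹' U := by
    intro z hz
    rw [mem_cosetOf] at hz
    have h1 : T z - T x ∈ N := hNf z x hz
    have h2 : (T z - T x) + T x ∈ U := hNsub h1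
    simpa using h2
  exact Filter.mem_of_superset ((isOpen_cosetOf hNopen x).mem_nhds (self_mem_cosetOf N x)) hsub
/-! ### Preimage of a coset is a coset -/

section Preimage

variable {G : Type*} [AddCommGroup G] [TopologicalSpace G] [IsTopologicalAddGroup G]
  [MeasurableSpace G] [BorelSpace G]

lemma exists_preimage_cosetOf (μ : Measure G) [μ.IsAddHaarMeasure] [IsProbabilityMeasure μ]
    {T : G → G} {N : AddSubgroup G} (hN : IsOpen (N : Set G))
    (hF : AddMapFactorsThrough T N)
    (hMP : ∀ S : Set G, MeasurableSet S → μ (T ⁻¹' S) = μ S) (x : G) :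
    ∃ y, T ⁻¹' (cosetOf N x) = cosetOf N y := by
  have hNpos : μ (N : Set G) ≠ 0 := hN.measure_ne_zero μ ⟨0, N.zero_mem⟩
  have hmeas := measurableSet_cosetOf hN x
  have hpre : μ (T ⁻¹' cosetOf N x) = μ (N : Set G) := by
    rw [hMP _ hmeas, measure_cosetOf]
  have hsub : ∀ z : G, T z ∈ cosetOf N x → cosetOf N z ⊆ T ⁻¹' cosetOf N x := by
    intro z hz w hw
    rw [mem_cosetOf] at hw hz
    have h1 : T w - T z ∈ N := hF w z hw
    have h2 : (T w - T z) + (T z - x) ∈ N := N.add_mem h1 hz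
    rw [sub_add_sub_cancel] at h2
    exact h2
  have hne : (T ⁻¹' cosetOf N x).Nonempty := by
    rw [Set.nonempty_iff_ne_empty]
    intro h
    rw [h, measure_empty] at hpre
    exact hNpos hpre.symm
  obtain ⟨y, hy⟩ := hne
  refine ⟨y, Set.Subset.antisymm ?_ (hsub y hy)⟩
  intro z hz
  by_contra hzy
  have hdisj : Disjoint (cosetOf N z) (cosetOf N y) := disjoint_cosetOf hzy
  have hunion : cosetOf N z ∪ cosetOf N y ⊆ T ⁻¹' cosetOf N x :=
    Set.union_subset (hsub z hz) (hsub y hy)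
  have hμ : μ (cosetOf N z ∪ cosetOf N y) = μ (N : Set G) + μ (N : Set G) := by
    rw [measure_union hdisj (measurableSet_cosetOf hN y), measure_cosetOf, measure_cosetOf]
  have hle : μ (N : Set G) + μ (N : Set G) ≤ μ (N : Set G) := by
    rw [← hμ, ← hpre]
    exact measure_mono hunion
  have hlt : μ (N : Set G) < μ (N : Set G) + μ (N : Set G) :=
    ENNReal.lt_add_right (measure_ne_top μ _) hNpos
  exact absurd hle (not_le.mpr hlt)

end Preimage

/-! ### Abstract permutation facts -/

section Perm

lemma perm_package {Q : Type*} [Finite Q] [Nonempty Q] {σ : Q → Q}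
    (hinj : Function.Injective σ) (htrans : ∀ c c' : Q, ∃ k, σ^[k] c = c') :
    (∀ c, σ^[Nat.card Q] c = c) ∧
      (∀ k k' : ℕ, k ≡ k' [MOD Nat.card Q] → ∀ c, σ^[k] c = σ^[k'] c) := by
  classical
  haveI := Fintype.ofFinite Q
  set m := Nat.card Q with hm
  have hmpos : 0 < m := Nat.card_pos
  -- step 1 : any positive period is at least m
  have step1 : ∀ (c : Q) (d : ℕ), 0 < d → σ^[d] c = c → m ≤ d := by
    intro c d hd hfix
    have aux : ∀ (j r : ℕ), σ^[r + d * j] c = σ^[r] c := by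
      intro j
      induction j with
      | zero => simp
      | succ n ih =>
        intro r
        have h1 : r + d * (n + 1) = (r + d * n) + d := by ring
        rw [h1, Function.iterate_add_apply, hfix, ih]
    have hper : ∀ t : ℕ, σ^[t] c = σ^[t % d] c := by
      intro t
      conv_lhs => rw [← Nat.mod_add_div t d]
      exact aux _ _
    have hsurj : (Finset.univ : Finset Q) ⊆ (Finset.range d).image (fun k => σ^[k] c) := by
      intro y _
      obtain ⟨k, hk⟩ := htrans c y
      refine Finset.mem_image.mpr ⟨k % d, Finset.mem_range.mpr (Nat.mod_lt _ hd), ?_⟩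
      rw [← hper k, hk]
    calc m = (Finset.univ : Finset Q).card := by
            rw [Finset.card_univ, hm, Nat.card_eq_fintype_card]
      _ ≤ ((Finset.range d).image (fun k => σ^[k] c)).card := Finset.card_le_card hsurj
      _ ≤ (Finset.range d).card := Finset.card_image_le
      _ = d := Finset.card_range d
  -- step 2 : σ^[m] = id
  have step2 : ∀ c, σ^[m] c = c := by
    intro c
    have hlt : (Finset.univ : Finset Q).card < (Finset.range (m + 1)).card := by
      rw [Finset.card_range, Finset.card_univ, ← Nat.card_eq_fintype_card, ← hm]
      omega
    obtain ⟨i, hi, j, hj, hij, heq⟩ :=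
      Finset.exists_ne_map_eq_of_card_lt_of_maps_to hlt
        (f := fun k => σ^[k] c) (fun k _ => Finset.mem_univ _)
    have key : ∀ i j : ℕ, i < j → j < m + 1 → σ^[i] c = σ^[j] c → σ^[m] c = c := by
      intro i j hij' hjm heq'
      have h1 : σ^[i] (σ^[j - i] c) = σ^[i] c := by
        rw [← Function.iterate_add_apply]
        have : i + (j - i) = j := by omega
        rw [this]
        exact heq'.symm
      have hfix : σ^[j - i] c = c := hinj.iterate i h1
      have hge : m ≤ j - i := step1 c _ (by omega) hfix
      have : j - i = m := by omega
      rw [← this]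
      exact hfix
    rcases hij.lt_or_gt with h | h
    · exact key i j h (Finset.mem_range.mp hj) heq
    · exact key j i h (Finset.mem_range.mp hi) heq.symm
  refine ⟨step2, ?_⟩
  have hmod : ∀ (t : ℕ) (c : Q), σ^[t] c = σ^[t % m] c := by
    have aux : ∀ (j r : ℕ) (c : Q), σ^[r + m * j] c = σ^[r] c := by
      intro j
      induction j with
      | zero => simp
      | succ n ih =>
        intro r c
        have h1 : r + m * (n + 1) = (r + m * n) + m := by ring
        rw [h1, Function.iterate_add_apply, step2, ih]
    intro t c
    conv_lhs => rw [← Nat.mod_add_div t m]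
    exact aux _ _ _
  intro k k' hkk' c
  rw [hmod k, hmod k', hkk']

end Perm
/-! ### The coordinate package -/

section Coord

variable {G : Type*} [AddCommGroup G] [TopologicalSpace G] [IsTopologicalAddGroup G]
  [CompactSpace G] [MeasurableSpace G] [BorelSpace G]

lemma coord_package (μ : Measure G) [μ.IsAddHaarMeasure] [IsProbabilityMeasure μ]
    {T : G → G} {N : AddSubgroup G} (hN : IsOpen (N : Set G))
    (hF : AddMapFactorsThrough T N)
    (hMP : ∀ S : Set G, MeasurableSet S → μ (T ⁻¹' S) = μ S)
    (hErg : ∀ S : Set G, MeasurableSet S → T ⁻¹' S = S → μ S = 0 ∨ μ S = 1) :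
    0 < Nat.card (G ⧸ N) ∧ (∀ a b : G, ∃ k, T^[k] a - b ∈ N) ∧
      (∀ k k' : ℕ, k ≡ k' [MOD Nat.card (G ⧸ N)] → ∀ a : G, T^[k] a - T^[k'] a ∈ N) := by
  classical
  haveI hfin : Finite (G ⧸ N) := AddSubgroup.quotient_finite_of_isOpen N hN
  haveI hne : Nonempty (G ⧸ N) := ⟨0⟩
  set σ : G ⧸ N → G ⧸ N := fun c => QuotientAddGroup.mk (T (Quotient.out c)) with hσ
  have hσmk : ∀ a : G, σ (QuotientAddGroup.mk a) = QuotientAddGroup.mk (T a) := by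
    intro a
    have h1 : (Quotient.out (QuotientAddGroup.mk a : G ⧸ N)) - a ∈ N :=
      QuotientAddGroup.eq_iff_sub_mem.mp (QuotientAddGroup.out_eq' _)
    exact QuotientAddGroup.eq_iff_sub_mem.mpr (hF _ _ h1)
  have hσiter : ∀ (k : ℕ) (a : G),
      σ^[k] (QuotientAddGroup.mk a) = QuotientAddGroup.mk (T^[k] a) := by
    intro k a
    induction k with
    | zero => simp
    | succ n ih =>
      rw [Function.iterate_succ_apply', Function.iterate_succ_apply', ih, hσmk]
  -- injectivity
  have hinj : Function.Injective σ := by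
    intro c c' h
    set a := Quotient.out c
    set b := Quotient.out c'
    have hab : T a - T b ∈ N := by
      apply QuotientAddGroup.eq_iff_sub_mem.mp
      show (QuotientAddGroup.mk (T a) : G ⧸ N) = QuotientAddGroup.mk (T b)
      rw [← hσmk, ← hσmk, QuotientAddGroup.out_eq', QuotientAddGroup.out_eq']
      exact h
    obtain ⟨y, hy⟩ := exists_preimage_cosetOf μ hN hF hMP (T b)
    have ha : a ∈ cosetOf N y := by
      rw [← hy]; exact hab
    have hb : b ∈ cosetOf N y := by
      rw [← hy]
      show T b ∈ cosetOf N (T b)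
      exact self_mem_cosetOf _ _
    have : a - b ∈ N := by
      rw [mem_cosetOf] at ha hb
      have := N.sub_mem ha hb
      rwa [sub_sub_sub_cancel_right] at this
    rw [← QuotientAddGroup.out_eq' c, ← QuotientAddGroup.out_eq' c']
    exact QuotientAddGroup.eq_iff_sub_mem.mpr this
  -- preimages of sets of cosets
  have hpreimage_eq : ∀ A : Set (G ⧸ N),
      (QuotientAddGroup.mk ⁻¹' A : Set G) = ⋃ d ∈ A, cosetOf N (Quotient.out d) := by
    intro A
    ext a
    simp only [Set.mem_preimage, Set.mem_iUnion, exists_prop]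
    constructor
    · intro ha
      refine ⟨QuotientAddGroup.mk a, ha, ?_⟩
      rw [mem_cosetOf]
      exact QuotientAddGroup.eq_iff_sub_mem.mp (QuotientAddGroup.out_eq' _).symm
    · rintro ⟨d, hd, had⟩
      rw [mem_cosetOf] at had
      have : (QuotientAddGroup.mk a : G ⧸ N) = QuotientAddGroup.mk (Quotient.out d) :=
        QuotientAddGroup.eq_iff_sub_mem.mpr had
      rwa [this, QuotientAddGroup.out_eq']
  -- transitivity via ergodicity
  have htrans : ∀ c c' : G ⧸ N, ∃ k, σ^[k] c = c' := by
    intro c c'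
    set O : Set (G ⧸ N) := {d | ∃ k, σ^[k] c = d} with hO
    have hcO : c ∈ O := ⟨0, rfl⟩
    have hσO : σ '' O ⊆ O := by
      rintro _ ⟨d, ⟨k, rfl⟩, rfl⟩
      exact ⟨k + 1, Function.iterate_succ_apply' σ k c⟩
    have himg : σ '' O = O :=
      Set.eq_of_subset_of_ncard_le hσO
        (le_of_eq (Set.ncard_image_of_injective O hinj).symm) (Set.toFinite O)
    have hpre : σ ⁻¹' O = O := by
      ext d
      simp only [Set.mem_preimage]
      constructor
      · intro hd
        rw [← himg] at hd
        obtain ⟨w, hw, hwd⟩ := hd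
        rwa [← hinj hwd]
      · intro hd
        rw [← himg]
        exact ⟨d, hd, rfl⟩
    set S : Set G := QuotientAddGroup.mk ⁻¹' O with hS
    have hSopen : IsOpen S := by
      rw [hS, hpreimage_eq]
      exact isOpen_biUnion fun d _ => isOpen_cosetOf hN _
    have hTS : T ⁻¹' S = S := by
      ext a
      show T a ∈ S ↔ a ∈ S
      rw [hS]
      show (QuotientAddGroup.mk (T a) : G ⧸ N) ∈ O ↔ (QuotientAddGroup.mk a : G ⧸ N) ∈ O
      rw [← hσmk]
      constructor
      · intro h
        have : (QuotientAddGroup.mk a : G ⧸ N) ∈ σ ⁻¹' O := h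
        rwa [hpre] at this
      · intro h
        have : (QuotientAddGroup.mk a : G ⧸ N) ∈ σ ⁻¹' O := by rwa [hpre]
        exact this
    rcases hErg S hSopen.measurableSet hTS with h0 | h1
    · exfalso
      have hsub : cosetOf N (Quotient.out c) ⊆ S := by
        intro a ha
        rw [mem_cosetOf] at ha
        have : (QuotientAddGroup.mk a : G ⧸ N) = c := by
          rw [QuotientAddGroup.eq_iff_sub_mem.mpr ha, QuotientAddGroup.out_eq']
        show (QuotientAddGroup.mk a : G ⧸ N) ∈ O
        rw [this]
        exact hcO
      have hle : μ (cosetOf N (Quotient.out c)) ≤ μ S := measure_mono hsub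
      rw [h0, measure_cosetOf] at hle
      exact (hN.measure_ne_zero μ ⟨0, N.zero_mem⟩) (le_antisymm hle zero_le)
    · have hcompl : μ Sᶜ = 0 := by
        rw [prob_compl_eq_one_sub hSopen.measurableSet, h1, tsub_self]
      have hScopen : IsOpen Sᶜ := by
        have h2 : Sᶜ = QuotientAddGroup.mk ⁻¹' Oᶜ := by rw [hS, Set.preimage_compl]
        rw [h2, hpreimage_eq]
        exact isOpen_biUnion fun d _ => isOpen_cosetOf hN _
      have hSc : Sᶜ = ∅ := by
        by_contra h
        exact hScopen.measure_ne_zero μ (Set.nonempty_iff_ne_empty.mpr h) hcompl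
      have hSuniv : S = Set.univ := Set.compl_empty_iff.mp hSc
      have hout : Quotient.out c' ∈ S := hSuniv ▸ Set.mem_univ _
      have : c' ∈ O := by
        have h3 : (QuotientAddGroup.mk (Quotient.out c') : G ⧸ N) ∈ O := hout
        rwa [QuotientAddGroup.out_eq'] at h3
      exact this
  obtain ⟨hfix, hmod⟩ := perm_package hinj htrans
  refine ⟨Nat.card_pos, ?_, ?_⟩
  · intro a b
    obtain ⟨k, hk⟩ := htrans (QuotientAddGroup.mk a) (QuotientAddGroup.mk b)
    rw [hσiter] at hk
    exact ⟨k, QuotientAddGroup.eq_iff_sub_mem.mp hk⟩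
  · intro k k' hkk' a
    have := hmod k k' hkk' (QuotientAddGroup.mk a)
    rw [hσiter, hσiter] at this
    exact QuotientAddGroup.eq_iff_sub_mem.mp this

end Coord
/-! ### p-adic facts -/

section Padic

lemma exists_span_le {p : ℕ} [hp : Fact p.Prime] {N : AddSubgroup ℤ_[p]}
    (hN : IsOpen (N : Set ℤ_[p])) :
    ∃ n : ℕ, Submodule.toAddSubgroup (Ideal.span {(p : ℤ_[p]) ^ n}) ≤ N := by
  obtain ⟨ε, hε, hball⟩ := Metric.isOpen_iff.mp hN 0 N.zero_mem
  have hp1 : (1 : ℝ) / p < 1 := by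
    have h1 : (1 : ℝ) < p := by exact_mod_cast hp.out.one_lt
    rw [div_lt_one (by linarith)]
    linarith
  obtain ⟨n, hn⟩ := exists_pow_lt_of_lt_one hε hp1
  refine ⟨n, fun x hx => ?_⟩
  have hx' : x ∈ Ideal.span {(p : ℤ_[p]) ^ n} := (Submodule.mem_toAddSubgroup _).mp hx
  have hnorm : ‖x‖ ≤ (p : ℝ) ^ (-(n : ℤ)) := (PadicInt.norm_le_pow_iff_mem_span_pow x n).mpr hx'
  have heq : ((p : ℝ)) ^ (-(n : ℤ)) = (1 / p) ^ n := by
    rw [zpow_neg, zpow_natCast, one_div, inv_pow]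
  apply hball
  rw [Metric.mem_ball, dist_zero_right]
  calc ‖x‖ ≤ (p : ℝ) ^ (-(n : ℤ)) := hnorm
    _ = (1 / p) ^ n := heq
    _ < ε := hn

lemma toZModPow_surjective (p : ℕ) [hp : Fact p.Prime] (n : ℕ) :
    Function.Surjective (PadicInt.toZModPow (p := p) n) := by
  intro c
  haveI : NeZero (p ^ n) := ⟨pow_ne_zero n hp.out.ne_zero⟩
  refine ⟨((c.val : ℕ) : ℤ_[p]), ?_⟩
  rw [map_natCast, ZMod.natCast_zmod_val]

lemma card_quot_dvd {p : ℕ} [hp : Fact p.Prime] {N : AddSubgroup ℤ_[p]}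
    (hN : IsOpen (N : Set ℤ_[p])) :
    ∃ n : ℕ, Nat.card (ℤ_[p] ⧸ N) ∣ p ^ n := by
  obtain ⟨n, hle⟩ := exists_span_le hN
  refine ⟨n, ?_⟩
  have h1 : N.index ∣ (Submodule.toAddSubgroup (Ideal.span {(p : ℤ_[p]) ^ n})).index :=
    AddSubgroup.index_dvd_of_le hle
  have h2 : (Submodule.toAddSubgroup (Ideal.span {(p : ℤ_[p]) ^ n})).index = p ^ n := by
    have hker : AddMonoidHom.ker (PadicInt.toZModPow (p := p) n).toAddMonoidHom =
        Submodule.toAddSubgroup (Ideal.span {(p : ℤ_[p]) ^ n}) := by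
      ext x
      rw [AddMonoidHom.mem_ker, Submodule.mem_toAddSubgroup, ← PadicInt.ker_toZModPow n,
        RingHom.mem_ker]
      rfl
    have e := QuotientAddGroup.quotientKerEquivOfSurjective
      (PadicInt.toZModPow (p := p) n).toAddMonoidHom (toZModPow_surjective p n)
    rw [← hker]
    show Nat.card (ℤ_[p] ⧸ (PadicInt.toZModPow (p := p) n).toAddMonoidHom.ker) = p ^ n
    rw [Nat.card_congr e.toEquiv, Nat.card_zmod]
  rw [← h2]
  exact h1

end Padic

/-! ### CRT over a finset -/

lemma crt_finset {ι : Type*} [DecidableEq ι] (s : Finset ι) (m : ι → ℕ) (k : ι → ℕ)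
    (hcop : ∀ i ∈ s, ∀ j ∈ s, i ≠ j → Nat.Coprime (m i) (m j)) :
    ∃ K : ℕ, ∀ i ∈ s, K ≡ k i [MOD m i] := by
  induction s using Finset.induction_on with
  | empty => exact ⟨0, by simp⟩
  | @insert a s' ha ih =>
    obtain ⟨K₀, hK₀⟩ := ih fun i hi j hj hij =>
      hcop i (Finset.mem_insert_of_mem hi) j (Finset.mem_insert_of_mem hj) hij
    have hc : Nat.Coprime (m a) (∏ i ∈ s', m i) :=
      Nat.Coprime.prod_right fun i hi =>
        hcop a (Finset.mem_insert_self a s') i (Finset.mem_insert_of_mem hi)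
          (fun h => ha (h ▸ hi))
    obtain ⟨K, h1, h2⟩ := Nat.chineseRemainder hc (k a) K₀
    refine ⟨K, fun i hi => ?_⟩
    rcases Finset.mem_insert.mp hi with rfl | hi'
    · exact h1
    · exact ((h2.of_dvd (Finset.dvd_prod_of_mem m hi'))).trans (hK₀ i hi')
/-! ### The product group -/

section Product

abbrev PG := ∀ q : Nat.Primes, ℤ_[(q : ℕ)]

variable (T : ∀ q : Nat.Primes, ℤ_[(q : ℕ)] → ℤ_[(q : ℕ)])

noncomputable section

def Tpi : PG → PG := fun x q => T q (x q)

lemma Tpi_iterate (k : ℕ) (x : PG) (q : Nat.Primes) :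
    (Tpi T)^[k] x q = (T q)^[k] (x q) := by
  induction k generalizing x with
  | zero => rfl
  | succ n ih =>
    rw [Function.iterate_succ_apply, Function.iterate_succ_apply]
    exact ih (Tpi T x)

abbrev GoodM (M : ∀ q : Nat.Primes, AddSubgroup ℤ_[(q : ℕ)]) : Prop :=
  (∀ q : Nat.Primes, IsOpen (M q : Set ℤ_[(q : ℕ)]) ∧ AddMapFactorsThrough (T q) (M q)) ∧
    {q | M q ≠ ⊤}.Finite

def Npi (M : ∀ q : Nat.Primes, AddSubgroup ℤ_[(q : ℕ)]) : AddSubgroup PG :=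
  AddSubgroup.pi Set.univ M

lemma mem_Npi {M : ∀ q : Nat.Primes, AddSubgroup ℤ_[(q : ℕ)]} {x : PG} :
    x ∈ Npi M ↔ ∀ q, x q ∈ M q := by
  simp [Npi, AddSubgroup.mem_pi]

lemma coe_Npi (M : ∀ q : Nat.Primes, AddSubgroup ℤ_[(q : ℕ)]) :
    (Npi M : Set PG) = {q | M q ≠ ⊤}.pi fun q => (M q : Set ℤ_[(q : ℕ)]) := by
  ext z
  simp only [SetLike.mem_coe, mem_Npi, Set.mem_pi, Set.mem_setOf_eq]
  constructor
  · intro h q _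
    exact h q
  · intro h q
    by_cases hq : M q = ⊤
    · rw [hq]; trivial
    · exact h q hq

lemma isOpen_Npi {M : ∀ q : Nat.Primes, AddSubgroup ℤ_[(q : ℕ)]} (hG : GoodM T M) :
    IsOpen (Npi M : Set PG) := by
  rw [coe_Npi]
  exact isOpen_set_pi hG.2 fun q _ => (hG.1 q).1

lemma factors_Npi {M : ∀ q : Nat.Primes, AddSubgroup ℤ_[(q : ℕ)]} (hG : GoodM T M) :
    AddMapFactorsThrough (Tpi T) (Npi M) := by
  intro x y h
  rw [mem_Npi] at h ⊢
  intro q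
  exact (hG.1 q).2 (x q) (y q) (h q)

lemma goodM_inf {M₁ M₂ : ∀ q : Nat.Primes, AddSubgroup ℤ_[(q : ℕ)]}
    (h₁ : GoodM T M₁) (h₂ : GoodM T M₂) : GoodM T fun q => M₁ q ⊓ M₂ q := by
  refine ⟨fun q => ⟨?_, factors_inf (h₁.1 q).2 (h₂.1 q).2⟩, ?_⟩
  · rw [AddSubgroup.coe_inf]
    exact ((h₁.1 q).1).inter ((h₂.1 q).1)
  · apply (h₁.2.union h₂.2).subset
    intro q hq
    rw [Set.mem_union]
    by_contra h
    push_neg at h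
    have ha : M₁ q = ⊤ := not_not.mp h.1
    have hb : M₂ q = ⊤ := not_not.mp h.2
    exact hq (show M₁ q ⊓ M₂ q = ⊤ by rw [ha, hb, inf_idem])

lemma Npi_inf (M₁ M₂ : ∀ q : Nat.Primes, AddSubgroup ℤ_[(q : ℕ)]) :
    Npi (fun q => M₁ q ⊓ M₂ q) = Npi M₁ ⊓ Npi M₂ := by
  ext x
  simp only [mem_Npi, AddSubgroup.mem_inf]
  exact forall_and

lemma exists_goodM_subset (hQP : ∀ q, AddQuotientPreserving (T q)) :
    ∀ U ∈ nhds (0 : PG), ∃ M, GoodM T M ∧ (Npi M : Set PG) ⊆ U := by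
  classical
  intro U hU
  obtain ⟨V, hVU, hVopen, hV0⟩ := mem_nhds_iff.mp hU
  obtain ⟨I, u, hu, huV⟩ := isOpen_pi_iff.mp hVopen 0 hV0
  have hn : ∀ q ∈ I, u q ∈ nhds (0 : ℤ_[(q : ℕ)]) := fun q hq =>
    (hu q hq).1.mem_nhds (hu q hq).2
  choose Nq hNq1 hNq2 hNq3 using fun q (h : q ∈ I) => hQP q (u q) (hn q h)
  refine ⟨fun (q : Nat.Primes) => if h : q ∈ I then Nq q h else ⊤, ⟨fun q => ?_, ?_⟩, ?_⟩
  · by_cases h : q ∈ I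
    · simp only [dif_pos h]
      exact ⟨hNq1 q h, hNq3 q h⟩
    · simp only [dif_neg h]
      constructor
      · rw [AddSubgroup.coe_top]; exact isOpen_univ
      · intro x y _; trivial
  · apply Set.Finite.subset I.finite_toSet
    intro q hq
    rw [Finset.mem_coe]
    by_contra h
    exact hq (dif_neg h)
  · intro z hz
    rw [SetLike.mem_coe, mem_Npi] at hz
    apply hVU
    apply huV
    intro q hq
    have hqI : q ∈ I := Finset.mem_coe.mp hq
    have := hz q
    rw [dif_pos hqI] at this
    exact hNq2 q hqI this

lemma part1 (hQP : ∀ q, AddQuotientPreserving (T q)) : AddQuotientPreserving (Tpi T) := by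
  intro U hU
  obtain ⟨M, hM, hsub⟩ := exists_goodM_subset T hQP U hU
  exact ⟨Npi M, isOpen_Npi T hM, hsub, factors_Npi T hM⟩

/-! ### The π-system of cosets -/

def Psys : Set (Set PG) := {C | ∃ M, GoodM T M ∧ ∃ x : PG, C = cosetOf (Npi M) x}

lemma isPiSystem_Psys : IsPiSystem (Psys T) := by
  rintro _ ⟨M₁, h₁, x₁, rfl⟩ _ ⟨M₂, h₂, x₂, rfl⟩ ⟨z, hz1, hz2⟩
  refine ⟨fun q => M₁ q ⊓ M₂ q, goodM_inf T h₁ h₂, z, ?_⟩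
  rw [← cosetOf_eq_of_mem hz1, ← cosetOf_eq_of_mem hz2]
  ext w
  simp only [Set.mem_inter_iff, mem_cosetOf, Npi_inf, AddSubgroup.mem_inf]

lemma basis_Psys (hQP : ∀ q, AddQuotientPreserving (T q)) :
    TopologicalSpace.IsTopologicalBasis (Psys T) := by
  apply TopologicalSpace.isTopologicalBasis_of_isOpen_of_nhds
  · rintro _ ⟨M, hM, x, rfl⟩
    exact isOpen_cosetOf (isOpen_Npi T hM) x
  · intro a U haU hUopen
    have hV : (fun z => z + a) ⁻¹' U ∈ nhds (0 : PG) := by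
      have hc : ContinuousAt (fun z : PG => z + a) 0 := by fun_prop
      apply hc
      simpa using hUopen.mem_nhds haU
    obtain ⟨M, hM, hsub⟩ := exists_goodM_subset T hQP _ hV
    refine ⟨cosetOf (Npi M) a, ⟨M, hM, a, rfl⟩, self_mem_cosetOf _ _, ?_⟩
    intro z hz
    rw [mem_cosetOf] at hz
    have : (z - a) + a ∈ U := hsub hz
    simpa using this

lemma generateFrom_Psys (hQP : ∀ q, AddQuotientPreserving (T q)) :
    (inferInstance : MeasurableSpace PG) = MeasurableSpace.generateFrom (Psys T) :=
  BorelSpace.measurable_eq.trans (basis_Psys T hQP).borel_eq_generateFrom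

end

end Product
section Final

variable (T : ∀ q : Nat.Primes, ℤ_[(q : ℕ)] → ℤ_[(q : ℕ)])
variable (μp : ∀ q : Nat.Primes, Measure ℤ_[(q : ℕ)])

lemma preimage_cosetOf_pi [∀ q, (μp q).IsAddHaarMeasure] [∀ q, IsProbabilityMeasure (μp q)]
    (hMP : ∀ q : Nat.Primes, ∀ S : Set ℤ_[(q : ℕ)], MeasurableSet S → μp q (T q ⁻¹' S) = μp q S)
    {M : ∀ q : Nat.Primes, AddSubgroup ℤ_[(q : ℕ)]} (hG : GoodM T M) (x : PG) :
    ∃ y : PG, Tpi T ⁻¹' cosetOf (Npi M) x = cosetOf (Npi M) y := by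
  have h := fun q => exists_preimage_cosetOf (μp q) (hG.1 q).1 (hG.1 q).2 (hMP q) (x q)
  choose y hy using h
  refine ⟨y, ?_⟩
  ext z
  constructor
  · intro h
    have h0 : ∀ q, Tpi T z q - x q ∈ M q := by
      intro q
      have := (mem_Npi.mp (mem_cosetOf.mp h)) q
      simpa using this
    show z - y ∈ Npi M
    rw [mem_Npi]
    intro q
    have h1 : z q ∈ (T q) ⁻¹' cosetOf (M q) (x q) := h0 q
    rw [hy q] at h1
    simpa using mem_cosetOf.mp h1
  · intro h
    have h0 : ∀ q, z q - y q ∈ M q := by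
      intro q
      have := (mem_Npi.mp (mem_cosetOf.mp h)) q
      simpa using this
    show Tpi T z - x ∈ Npi M
    rw [mem_Npi]
    intro q
    have h1 : z q ∈ cosetOf (M q) (y q) := h0 q
    rw [← hy q] at h1
    exact h1

lemma part2 (μ : Measure PG) [μ.IsAddHaarMeasure] [IsProbabilityMeasure μ]
    [∀ q, (μp q).IsAddHaarMeasure] [∀ q, IsProbabilityMeasure (μp q)]
    (hQP : ∀ q, AddQuotientPreserving (T q))
    (hMP : ∀ q : Nat.Primes, ∀ S : Set ℤ_[(q : ℕ)], MeasurableSet S → μp q (T q ⁻¹' S) = μp q S) :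
    ∀ S : Set PG, MeasurableSet S → μ (Tpi T ⁻¹' S) = μ S := by
  have hTc : Continuous (Tpi T) :=
    continuous_pi fun q => (aqp_continuous (hQP q)).comp (continuous_apply q)
  have hTm : Measurable (Tpi T) := hTc.measurable
  have hmap : μ.map (Tpi T) = μ := by
    apply ext_of_generate_finite (Psys T) (generateFrom_Psys T hQP) (isPiSystem_Psys T)
    · rintro _ ⟨M, hG, x, rfl⟩
      rw [Measure.map_apply hTm (measurableSet_cosetOf (isOpen_Npi T hG) x)]
      obtain ⟨y, hy⟩ := preimage_cosetOf_pi T μp hMP hG x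
      rw [hy, measure_cosetOf, measure_cosetOf]
    · rw [Measure.map_apply hTm MeasurableSet.univ, Set.preimage_univ]
  intro S hS
  conv_rhs => rw [← hmap]
  rw [Measure.map_apply hTm hS]

lemma part3 (μ : Measure PG) [μ.IsAddHaarMeasure] [IsProbabilityMeasure μ]
    [∀ q, (μp q).IsAddHaarMeasure] [∀ q, IsProbabilityMeasure (μp q)]
    (hQP : ∀ q, AddQuotientPreserving (T q))
    (hMP : ∀ q : Nat.Primes, ∀ S : Set ℤ_[(q : ℕ)], MeasurableSet S → μp q (T q ⁻¹' S) = μp q S)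
    (hErg : ∀ q : Nat.Primes, ∀ S : Set ℤ_[(q : ℕ)], MeasurableSet S → T q ⁻¹' S = S →
      μp q S = 0 ∨ μp q S = 1) :
    ∀ S : Set PG, MeasurableSet S → Tpi T ⁻¹' S = S → μ S = 0 ∨ μ S = 1 := by
  classical
  have hMP2 := part2 T μp μ hQP hMP
  intro S hS hinv
  have hind : ∀ C ∈ Psys T, μ (S ∩ C) = μ S * μ C := by
    rintro _ ⟨M, hG, x₀, rfl⟩
    set N := Npi M with hNdef
    have hNopen : IsOpen (N : Set PG) := isOpen_Npi T hG
    haveI hQfin : Finite (PG ⧸ N) := AddSubgroup.quotient_finite_of_isOpen N hNopen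
    have hcp := fun q => coord_package (μp q) (hG.1 q).1 (hG.1 q).2 (hMP q) (hErg q)
    set m : Nat.Primes → ℕ := fun q => Nat.card (ℤ_[(q : ℕ)] ⧸ M q) with hm
    have hmpos : ∀ q, 0 < m q := fun q => (hcp q).1
    have htransq : ∀ q : Nat.Primes, ∀ a b : ℤ_[(q : ℕ)], ∃ k, (T q)^[k] a - b ∈ M q := fun q => (hcp q).2.1
    have hmodq : ∀ q : Nat.Primes, ∀ k k' : ℕ, k ≡ k' [MOD m q] →
        ∀ a : ℤ_[(q : ℕ)], (T q)^[k] a - (T q)^[k'] a ∈ M q := fun q => (hcp q).2.2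
    have hdvd : ∀ q : Nat.Primes, ∃ n : ℕ, m q ∣ (q : ℕ) ^ n := fun q => card_quot_dvd (hG.1 q).1
    have hcop : ∀ q r : Nat.Primes, q ≠ r → Nat.Coprime (m q) (m r) := by
      intro q r hqr
      obtain ⟨nq, hq⟩ := hdvd q
      obtain ⟨nr, hr⟩ := hdvd r
      have hpq : Nat.Coprime ((q : ℕ) ^ nq) ((r : ℕ) ^ nr) :=
        Nat.Coprime.pow _ _ ((Nat.coprime_primes q.2 r.2).mpr fun h => hqr (Subtype.ext h))
      exact Nat.Coprime.coprime_dvd_right hr (Nat.Coprime.coprime_dvd_left hq hpq)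
    set s : Finset Nat.Primes := hG.2.toFinset with hs
    have hMtop : ∀ q ∉ s, M q = ⊤ := by
      intro q hq
      by_contra h
      exact hq (hG.2.mem_toFinset.mpr h)
    set mm : ℕ := ∏ q ∈ s, m q with hmm
    have hmmpos : 0 < mm := Finset.prod_pos fun q _ => hmpos q
    have hmod_pi : ∀ k k' : ℕ, k ≡ k' [MOD mm] →
        ∀ a : PG, (Tpi T)^[k] a - (Tpi T)^[k'] a ∈ N := by
      intro k k' hkk' a
      rw [hNdef, mem_Npi]
      intro q
      rw [Pi.sub_apply, Tpi_iterate, Tpi_iterate]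
      by_cases hq : q ∈ s
      · exact hmodq q k k' (hkk'.of_dvd (Finset.dvd_prod_of_mem m hq)) (a q)
      · rw [hMtop q hq]; trivial
    have htrans_pi : ∀ a b : PG, ∃ k, (Tpi T)^[k] a - b ∈ N := by
      intro a b
      choose kq hkq using fun q => htransq q (a q) (b q)
      obtain ⟨K, hK⟩ := crt_finset s m kq fun i _ j _ hij => hcop i j hij
      refine ⟨K, ?_⟩
      rw [hNdef, mem_Npi]
      intro q
      rw [Pi.sub_apply, Tpi_iterate]
      by_cases hq : q ∈ s
      · have h1 : (T q)^[K] (a q) - (T q)^[kq q] (a q) ∈ M q := hmodq q K (kq q) (hK q hq) (a q)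
        have h2 := (M q).add_mem h1 (hkq q)
        rwa [sub_add_sub_cancel] at h2
      · rw [hMtop q hq]; trivial
    have hmeasC : ∀ x : PG, MeasurableSet (cosetOf N x) := measurableSet_cosetOf hNopen
    have hstep : ∀ x : PG, μ (S ∩ Tpi T ⁻¹' cosetOf N x) = μ (S ∩ cosetOf N x) := by
      intro x
      conv_lhs => rw [← hinv]
      rw [← Set.preimage_inter]
      exact hMP2 _ (hS.inter (hmeasC x))
    have hper : ∀ x : PG, (Tpi T)^[mm] x - x ∈ N := by
      intro x
      have := hmod_pi mm 0 (Nat.modEq_zero_iff_dvd.mpr dvd_rfl) x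
      simpa using this
    have hb : ∀ x : PG, Tpi T ⁻¹' cosetOf N x = cosetOf N ((Tpi T)^[mm - 1] x) := by
      intro x
      obtain ⟨w, hw⟩ := preimage_cosetOf_pi T μp hMP hG x
      have hmem : (Tpi T)^[mm - 1] x ∈ cosetOf N w := by
        rw [← hw]
        show Tpi T ((Tpi T)^[mm - 1] x) ∈ cosetOf N x
        have h2 : (Tpi T)^[mm] x = Tpi T ((Tpi T)^[mm - 1] x) := by
          conv_lhs => rw [show mm = (mm - 1) + 1 by omega]
          rw [Function.iterate_succ_apply']
        rw [mem_cosetOf, ← h2]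
        exact hper x
      rw [hw, cosetOf_eq_of_mem hmem]
    have hback : ∀ x : PG, μ (S ∩ cosetOf N x) = μ (S ∩ cosetOf N ((Tpi T)^[mm - 1] x)) := by
      intro x
      rw [← hb, hstep]
    have hback_iter : ∀ (j : ℕ) (x : PG),
        μ (S ∩ cosetOf N x) = μ (S ∩ cosetOf N ((Tpi T)^[j * (mm - 1)] x)) := by
      intro j
      induction j with
      | zero => intro x; simp
      | succ n ih =>
        intro x
        have h1 : (n + 1) * (mm - 1) = (mm - 1) + n * (mm - 1) := by ring
        rw [h1, Function.iterate_add_apply, ih x, hback]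
    have hconst : ∀ x y : PG, μ (S ∩ cosetOf N x) = μ (S ∩ cosetOf N y) := by
      intro x y
      obtain ⟨k, hk⟩ := htrans_pi x y
      have hcast : ((mm - 1 : ℕ) : ZMod mm) = -1 := by
        rw [Nat.cast_sub (by omega : 1 ≤ mm), Nat.cast_one, ZMod.natCast_self, zero_sub]
      have hcong : k * (mm - 1) * (mm - 1) ≡ k [MOD mm] := by
        apply (ZMod.natCast_eq_natCast_iff _ _ _).mp
        rw [Nat.cast_mul, Nat.cast_mul, hcast]
        ring
      calc μ (S ∩ cosetOf N x)
          = μ (S ∩ cosetOf N ((Tpi T)^[k * (mm - 1) * (mm - 1)] x)) := hback_iter _ x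
        _ = μ (S ∩ cosetOf N ((Tpi T)^[k] x)) := by
            rw [cosetOf_eq_of_mem
              (show (Tpi T)^[k * (mm - 1) * (mm - 1)] x ∈ cosetOf N ((Tpi T)^[k] x) from
                hmod_pi _ _ hcong x)]
        _ = μ (S ∩ cosetOf N y) := by
            rw [cosetOf_eq_of_mem (show (Tpi T)^[k] x ∈ cosetOf N y from hk)]
    -- partition into cosets and conclude
    have hcover : (⋃ c : PG ⧸ N, cosetOf N (Quotient.out c)) = Set.univ := by
      ext a
      simp only [Set.mem_iUnion, Set.mem_univ, iff_true]
      refine ⟨QuotientAddGroup.mk a, ?_⟩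
      rw [mem_cosetOf]
      exact QuotientAddGroup.eq_iff_sub_mem.mp (QuotientAddGroup.out_eq' _).symm
    have hdisj : Pairwise (Function.onFun Disjoint fun c : PG ⧸ N => cosetOf N (Quotient.out c)) := by
      intro c c' hcc'
      apply disjoint_cosetOf
      rw [mem_cosetOf]
      intro h
      apply hcc'
      rw [← QuotientAddGroup.out_eq' c, ← QuotientAddGroup.out_eq' c']
      exact QuotientAddGroup.eq_iff_sub_mem.mpr h
    haveI : Fintype (PG ⧸ N) := Fintype.ofFinite _
    have hsum : ∀ V : Set PG, MeasurableSet V →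
        μ V = ∑' c : PG ⧸ N, μ (V ∩ cosetOf N (Quotient.out c)) := by
      intro V hV
      have hd2 : Pairwise (Function.onFun Disjoint fun c : PG ⧸ N => V ∩ cosetOf N (Quotient.out c)) :=
        fun c c' h => (hdisj h).mono Set.inter_subset_right Set.inter_subset_right
      conv_lhs => rw [← Set.inter_univ V, ← hcover, Set.inter_iUnion]
      rw [measure_iUnion hd2 fun c => hV.inter (hmeasC _)]
    have htsum_const : ∀ a : ENNReal,
        (∑' _ : PG ⧸ N, a) = (Nat.card (PG ⧸ N) : ENNReal) * a := by
      intro a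
      rw [tsum_eq_sum (s := Finset.univ) fun b hb => absurd (Finset.mem_univ b) hb,
        Finset.sum_const, Finset.card_univ, Nat.card_eq_fintype_card, nsmul_eq_mul]
    have hμS : μ S = (Nat.card (PG ⧸ N) : ENNReal) * μ (S ∩ cosetOf N x₀) := by
      rw [hsum S hS]
      exact (tsum_congr fun c => hconst (Quotient.out c) x₀).trans (htsum_const _)
    have hone : (1 : ENNReal) = (Nat.card (PG ⧸ N) : ENNReal) * μ (cosetOf N x₀) := by
      have h1 := hsum Set.univ MeasurableSet.univ
      rw [measure_univ] at h1
      rw [h1]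
      refine (tsum_congr fun c => ?_).trans (htsum_const _)
      rw [Set.univ_inter, measure_cosetOf, measure_cosetOf]
    calc μ (S ∩ cosetOf N x₀)
        = μ (S ∩ cosetOf N x₀) * 1 := (mul_one _).symm
      _ = μ (S ∩ cosetOf N x₀) * ((Nat.card (PG ⧸ N) : ENNReal) * μ (cosetOf N x₀)) := by
          rw [← hone]
      _ = ((Nat.card (PG ⧸ N) : ENNReal) * μ (S ∩ cosetOf N x₀)) * μ (cosetOf N x₀) := by
          ring
      _ = μ S * μ (cosetOf N x₀) := by rw [← hμS]
  have hres : μ.restrict S = μ S • μ := by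
    apply ext_of_generate_finite (Psys T) (generateFrom_Psys T hQP) (isPiSystem_Psys T)
    · intro C hC
      rw [Measure.restrict_apply' hS, Set.inter_comm, Measure.smul_apply, smul_eq_mul]
      exact hind C hC
    · rw [Measure.restrict_apply' hS, Set.univ_inter, Measure.smul_apply, measure_univ,
        smul_eq_mul, mul_one]
  have h0 : μ (Sᶜ ∩ S) = μ S * μ Sᶜ := by
    rw [← Measure.restrict_apply' hS, hres, Measure.smul_apply, smul_eq_mul]
  rw [Set.compl_inter_self, measure_empty] at h0
  rcases mul_eq_zero.mp h0.symm with h | h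
  · exact Or.inl h
  · right
    rw [prob_compl_eq_one_sub hS] at h
    exact le_antisymm prob_le_one (tsub_eq_zero_iff_le.mp h)

end Final
end Stmt18Aux

theorem stmt18
    (μp : ∀ q : Nat.Primes, Measure ℤ_[(q : ℕ)])
    [∀ q, (μp q).IsAddHaarMeasure] [∀ q, IsProbabilityMeasure (μp q)]
    -- μ is the product of the Haar measures, i.e. the Haar measure on the product group
    (μ : Measure (∀ q : Nat.Primes, ℤ_[(q : ℕ)]))
    [μ.IsAddHaarMeasure] [IsProbabilityMeasure μ]
    (T : ∀ q : Nat.Primes, ℤ_[(q : ℕ)] → ℤ_[(q : ℕ)])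
    (hQP : ∀ q : Nat.Primes, AddQuotientPreserving (T q))
    (hMP : ∀ q : Nat.Primes, ∀ S : Set ℤ_[(q : ℕ)], MeasurableSet S → μp q (T q ⁻¹' S) = μp q S)
    (hErg : ∀ q : Nat.Primes, ∀ S : Set ℤ_[(q : ℕ)], MeasurableSet S → T q ⁻¹' S = S →
      μp q S = 0 ∨ μp q S = 1) :
    -- the product map is quotient-preserving,
    AddQuotientPreserving
      (fun (x : ∀ q : Nat.Primes, ℤ_[(q : ℕ)]) q => T q (x q)) ∧
    -- measure-preserving,
    (∀ S : Set (∀ q : Nat.Primes, ℤ_[(q : ℕ)]), MeasurableSet S →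
      μ ((fun (x : ∀ q : Nat.Primes, ℤ_[(q : ℕ)]) q => T q (x q)) ⁻¹' S) = μ S) ∧
    -- and ergodic
    (∀ S : Set (∀ q : Nat.Primes, ℤ_[(q : ℕ)]), MeasurableSet S →
      (fun (x : ∀ q : Nat.Primes, ℤ_[(q : ℕ)]) q => T q (x q)) ⁻¹' S = S →
      μ S = 0 ∨ μ S = 1) := by
  exact ⟨Stmt18Aux.part1 T hQP, Stmt18Aux.part2 T μp μ hQP hMP,
    Stmt18Aux.part3 T μp μ hQP hMP hErg⟩
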